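/- Optimal state distinguishing (Helstrom bound), as used in the security proofs: let ρ and σ be density matrices over a nonempty finite index type α. Then (i) for every Hermitian matrix E with 0 ≤ E ≤ 1 (positive semidefinite and with 1 − E positive semidefinite), the distinguishing probability (1/2) · (trace (E * ρ) + trace ((1 − E) * σ)).re is at most (1/2) · (1 + TD(ρ, σ)); and (ii) there exists such a matrix E for which this distinguishing probability equals (1/2) · (1 + TD(ρ, σ)). -/

import Mathlib

open Matrix BigOperators
open scoped ComplexOrder

/-- The trace norm of a square complex matrix: the trace of the positive semidefinite
square root of `Aᴴ * A`. -/
noncomputable def traceNorm {α : Type*} [Fintype α] [DecidableEq α]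
    (A : Matrix α α ℂ) : ℝ :=
  (((Matrix.posSemidef_conjTranspose_mul_self A).1.eigenvectorUnitary : Matrix α α ℂ) *
      Matrix.diagonal (((↑) : ℝ → ℂ) ∘ (Real.sqrt ·) ∘ (Matrix.posSemidef_conjTranspose_mul_self A).1.eigenvalues) *
      (star ((Matrix.posSemidef_conjTranspose_mul_self A).1.eigenvectorUnitary : Matrix α α ℂ))).trace.re

/-- The trace distance of two matrices. -/
noncomputable def traceDist {α : Type*} [Fintype α] [DecidableEq α]
    (ρ σ : Matrix α α ℂ) : ℝ :=
  (1 / 2) * traceNorm (ρ - σ)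

/-- A density matrix: Hermitian positive semidefinite with trace 1. -/
def IsDensityMatrix {α : Type*} [Fintype α] (ρ : Matrix α α ℂ) : Prop :=
  ρ.PosSemidef ∧ ρ.trace = 1

section aux
variable {α : Type*} [Fintype α] [DecidableEq α]

lemma my_diag_re_nonneg {M : Matrix α α ℂ} (hM : M.PosSemidef) (i : α) :
    0 ≤ (M i i).re := by
  have h : (0 : ℂ) ≤ M i i := hM.diag_nonneg
  exact (Complex.le_def.mp h).1

lemma my_trace_mul_diagonal (M : Matrix α α ℂ) (d : α → ℂ) :
    (M * diagonal d).trace = ∑ i, M i i * d i := by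
  simp [trace, Matrix.diag, mul_diagonal]

/-- Product of two conjugated diagonal matrices. -/
lemma my_conj_mul (U : Matrix α α ℂ) (hUU : star U * U = 1) (d e : α → ℂ) :
    (U * diagonal d * star U) * (U * diagonal e * star U)
      = U * diagonal (fun i => d i * e i) * star U := by
  have h : (U * diagonal d * star U) * (U * diagonal e * star U)
      = U * (diagonal d * ((star U * U) * diagonal e)) * star U := by noncomm_ring
  rw [h, hUU, one_mul, diagonal_mul_diagonal]

lemma my_conj_trace (U : Matrix α α ℂ) (hUU : star U * U = 1) (d : α → ℂ) :
    (U * diagonal d * star U).trace = ∑ i, d i := by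
  rw [trace_mul_cycle, hUU, one_mul, trace_diagonal]

lemma my_conj_herm (U : Matrix α α ℂ) (d : α → ℝ) :
    (U * diagonal (fun i => (d i : ℂ)) * star U).IsHermitian := by
  unfold Matrix.IsHermitian
  rw [conjTranspose_mul, conjTranspose_mul, diagonal_conjTranspose, ← star_eq_conjTranspose,
    ← star_eq_conjTranspose, star_star, Matrix.mul_assoc]
  have hd : star (fun i => (d i : ℂ)) = fun i => (d i : ℂ) := by
    funext i
    simp [Pi.star_apply, Complex.star_def, Complex.conj_ofReal]
  rw [hd]

lemma my_conj_psd (U : Matrix α α ℂ) (d : α → ℝ) (hd : ∀ i, 0 ≤ d i) :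
    (U * diagonal (fun i => (d i : ℂ)) * star U).PosSemidef := by
  rw [star_eq_conjTranspose]
  exact (posSemidef_diagonal_iff.mpr fun i => Complex.zero_le_real.mpr (hd i)
    ).mul_mul_conjTranspose_same U

open scoped MatrixOrder in
lemma my_traceNorm_hermitian {A : Matrix α α ℂ} (hA : A.IsHermitian) :
    traceNorm A = ∑ i, |hA.eigenvalues i| := by
  have hUU : star (hA.eigenvectorUnitary : Matrix α α ℂ) * hA.eigenvectorUnitary = 1 :=
    Unitary.coe_star_mul_self hA.eigenvectorUnitary
  set U : Matrix α α ℂ := ↑hA.eigenvectorUnitary with hU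
  set B : Matrix α α ℂ := U * diagonal (fun i => ((|hA.eigenvalues i| : ℝ) : ℂ)) * star U with hB
  have hBpsd : B.PosSemidef := my_conj_psd U _ fun i => abs_nonneg _
  have hsq : B ^ 2 = Aᴴ * A := by
    rw [hA.eq, pow_two, hB, my_conj_mul U hUU]
    conv_rhs => rw [hA.spectral_theorem, Unitary.conjStarAlgAut_apply]
    rw [← hU,
      show (RCLike.ofReal ∘ hA.eigenvalues : α → ℂ) = fun i => ((hA.eigenvalues i : ℝ) : ℂ)
        from rfl,
      my_conj_mul U hUU]
    have habs : ∀ i : α, ((|hA.eigenvalues i| : ℝ) : ℂ) * ((|hA.eigenvalues i| : ℝ) : ℂ)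
        = ((hA.eigenvalues i : ℝ) : ℂ) * ((hA.eigenvalues i : ℝ) : ℂ) := by
      intro i
      rw [← Complex.ofReal_mul, ← Complex.ofReal_mul, abs_mul_abs_self]
    rw [show (fun i => ((|hA.eigenvalues i| : ℝ) : ℂ) * ((|hA.eigenvalues i| : ℝ) : ℂ))
        = fun i => ((hA.eigenvalues i : ℝ) : ℂ) * ((hA.eigenvalues i : ℝ) : ℂ)
        from funext habs]
  have hBe : B = CFC.sqrt (Aᴴ * A) :=
    (CFC.sqrt_unique ((pow_two B).symm.trans hsq) hBpsd.nonneg).symm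
  have hP := Matrix.posSemidef_conjTranspose_mul_self A
  set V : Matrix α α ℂ := ↑hP.1.eigenvectorUnitary with hV
  have hVV : star V * V = 1 := Unitary.coe_star_mul_self _
  set S : Matrix α α ℂ :=
    V * diagonal (fun i => ((Real.sqrt (hP.1.eigenvalues i) : ℝ) : ℂ)) * star V with hS
  have hT : traceNorm A = S.trace.re := rfl
  have hSpsd : S.PosSemidef := my_conj_psd V _ fun i => Real.sqrt_nonneg _
  have hSS : S * S = Aᴴ * A := by
    rw [hS, my_conj_mul V hVV]
    conv_rhs => rw [hP.1.spectral_theorem, Unitary.conjStarAlgAut_apply]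
    rw [← hV]
    congr 2
    exact congrArg diagonal (funext fun i => by
      rw [← Complex.ofReal_mul, Real.mul_self_sqrt (hP.eigenvalues_nonneg i)]
      rfl)
  have hSe : S = CFC.sqrt (Aᴴ * A) := (CFC.sqrt_unique hSS hSpsd.nonneg).symm
  rw [hT, hSe, ← hBe, hB, my_conj_trace U hUU, ← Complex.ofReal_sum]
  exact Complex.ofReal_re _

lemma my_trace_formula {Δ : Matrix α α ℂ} (hΔ : Δ.IsHermitian) (E : Matrix α α ℂ) :
    ((E * Δ).trace).re =
      ∑ i, hΔ.eigenvalues i *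
        ((star (hΔ.eigenvectorUnitary : Matrix α α ℂ) * E *
          (hΔ.eigenvectorUnitary : Matrix α α ℂ)) i i).re := by
  set U : Matrix α α ℂ := ↑hΔ.eigenvectorUnitary with hU
  have h1 : (E * Δ).trace =
      ((star U * E * U) * diagonal (fun i => ((hΔ.eigenvalues i : ℝ) : ℂ))).trace := by
    conv_lhs => rw [hΔ.spectral_theorem, Unitary.conjStarAlgAut_apply]
    rw [← hU,
      show (RCLike.ofReal ∘ hΔ.eigenvalues : α → ℂ) = fun i => ((hΔ.eigenvalues i : ℝ) : ℂ)
        from rfl]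
    rw [show E * (U * diagonal (fun i => ((hΔ.eigenvalues i : ℝ) : ℂ)) * star U)
        = (E * U * diagonal (fun i => ((hΔ.eigenvalues i : ℝ) : ℂ))) * star U by noncomm_ring,
      trace_mul_comm]
    noncomm_ring
  rw [h1, my_trace_mul_diagonal, Complex.re_sum]
  congr 1; funext i
  simp [Complex.mul_re, mul_comm]

end aux

theorem stmt14 {α : Type*} [Fintype α] [DecidableEq α] [Nonempty α]
    (ρ σ : Matrix α α ℂ) (hρ : IsDensityMatrix ρ) (hσ : IsDensityMatrix σ) :
    (∀ E : Matrix α α ℂ, E.IsHermitian → E.PosSemidef → (1 - E).PosSemidef →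
        (1 / 2 : ℝ) * ((E * ρ).trace + ((1 - E) * σ).trace).re ≤
          (1 / 2) * (1 + traceDist ρ σ)) ∧
    (∃ E : Matrix α α ℂ, E.IsHermitian ∧ E.PosSemidef ∧ (1 - E).PosSemidef ∧
        (1 / 2 : ℝ) * ((E * ρ).trace + ((1 - E) * σ).trace).re =
          (1 / 2) * (1 + traceDist ρ σ)) := by
  set Δ : Matrix α α ℂ := ρ - σ with hΔdef
  have hΔ : Δ.IsHermitian := hρ.1.1.sub hσ.1.1
  have hUU : star (hΔ.eigenvectorUnitary : Matrix α α ℂ) * hΔ.eigenvectorUnitary = 1 :=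
    Unitary.coe_star_mul_self hΔ.eigenvectorUnitary
  have hUU' : (hΔ.eigenvectorUnitary : Matrix α α ℂ) *
      star (hΔ.eigenvectorUnitary : Matrix α α ℂ) = 1 :=
    Unitary.coe_mul_star_self hΔ.eigenvectorUnitary
  set lam := hΔ.eigenvalues with hlam
  set U : Matrix α α ℂ := ↑hΔ.eigenvectorUnitary with hU
  -- sum of eigenvalues is 0
  have htr0 : Δ.trace = 0 := by
    rw [hΔdef, trace_sub, hρ.2, hσ.2, sub_self]
  have hsum0 : ∑ i, lam i = 0 := by
    have h1 : Δ.trace = ∑ i, ((lam i : ℝ) : ℂ) := by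
      conv_lhs => rw [hΔ.spectral_theorem, Unitary.conjStarAlgAut_apply]
      rw [← hU,
        show (RCLike.ofReal ∘ hΔ.eigenvalues : α → ℂ) = fun i => ((lam i : ℝ) : ℂ) from rfl,
        my_conj_trace U hUU]
    rw [htr0, ← Complex.ofReal_sum] at h1
    exact_mod_cast h1.symm
  -- trace dist equals sum of positive parts
  have hTD : traceDist ρ σ = ∑ i, max (lam i) 0 := by
    simp only [traceDist]
    rw [← hΔdef, my_traceNorm_hermitian hΔ, ← hlam]
    have h2 : ∀ i : α, max (lam i) 0 = |lam i| / 2 + lam i / 2 := by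
      intro i
      rcases le_total (lam i) 0 with h | h
      · rw [max_eq_right h, abs_of_nonpos h]; ring
      · rw [max_eq_left h, abs_of_nonneg h]; ring
    rw [Finset.sum_congr rfl fun i _ => h2 i, Finset.sum_add_distrib, ← Finset.sum_div,
      ← Finset.sum_div, hsum0]
    ring
  -- key inequality for arbitrary E
  have hkey : ∀ E : Matrix α α ℂ, E.PosSemidef → (1 - E).PosSemidef →
      ((E * Δ).trace).re ≤ ∑ i, max (lam i) 0 := by
    intro E hE hE1
    rw [my_trace_formula hΔ E, ← hU, ← hlam]
    have hM : (star U * E * U).PosSemidef := by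
      rw [star_eq_conjTranspose]; exact hE.conjTranspose_mul_mul_same U
    have hN : (star U * (1 - E) * U).PosSemidef := by
      rw [star_eq_conjTranspose]; exact hE1.conjTranspose_mul_mul_same U
    apply Finset.sum_le_sum
    intro i _
    have he0 : 0 ≤ ((star U * E * U) i i).re := my_diag_re_nonneg hM i
    have he1 : ((star U * E * U) i i).re ≤ 1 := by
      have hsum : (star U * E * U) + (star U * (1 - E) * U) = 1 := by
        rw [show (star U * E * U) + (star U * (1 - E) * U) = star U * (E + (1 - E)) * U by
          noncomm_ring]
        rw [add_sub_cancel, Matrix.mul_one, hUU]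
      have h1 : ((star U * E * U) i i).re + ((star U * (1 - E) * U) i i).re = 1 := by
        have := congrArg (fun M : Matrix α α ℂ => (M i i).re) hsum
        simpa [Matrix.add_apply, Matrix.one_apply_eq] using this
      linarith [my_diag_re_nonneg hN i]
    rcases le_total 0 (lam i) with h | h
    · calc lam i * ((star U * E * U) i i).re ≤ lam i * 1 :=
            mul_le_mul_of_nonneg_left he1 h
        _ = lam i := mul_one _
        _ ≤ max (lam i) 0 := le_max_left _ _
    · calc lam i * ((star U * E * U) i i).re ≤ 0 := mul_nonpos_of_nonpos_of_nonneg h he0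
        _ ≤ max (lam i) 0 := le_max_right _ _
  -- relate the distinguishing probability to the trace of E * Δ
  have hprob : ∀ E : Matrix α α ℂ,
      ((E * ρ).trace + ((1 - E) * σ).trace).re = 1 + ((E * Δ).trace).re := by
    intro E
    have h1 : (E * ρ).trace + ((1 - E) * σ).trace = 1 + (E * Δ).trace := by
      rw [hΔdef, Matrix.mul_sub, trace_sub, Matrix.sub_mul, Matrix.one_mul, trace_sub, hσ.2]
      ring
    rw [h1, Complex.add_re, Complex.one_re]
  constructor
  · intro E _ hE hE1
    rw [hprob E, hTD]
    have := hkey E hE hE1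
    linarith
  · -- the optimal measurement
    set P : α → ℝ := fun i => if 0 < lam i then 1 else 0 with hP
    set E : Matrix α α ℂ := U * diagonal (fun i => ((P i : ℝ) : ℂ)) * star U with hE
    have hEherm : E.IsHermitian := my_conj_herm U P
    have hEpsd : E.PosSemidef := my_conj_psd U P fun i => by
      simp only [hP]; split <;> norm_num
    have h1d : diagonal (fun i => ((1 - P i : ℝ) : ℂ))
        = 1 - diagonal (fun i => ((P i : ℝ) : ℂ)) := by
      rw [← diagonal_one, diagonal_sub]
      congr! 1 with i
      push_cast; ring
    have hone : (1 : Matrix α α ℂ) - E = U * diagonal (fun i => ((1 - P i : ℝ) : ℂ)) * star U := by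
      rw [h1d, Matrix.mul_sub, Matrix.sub_mul, Matrix.mul_one, hUU', hE]
    have hE1psd : ((1 : Matrix α α ℂ) - E).PosSemidef := by
      rw [hone]
      exact my_conj_psd U _ fun i => by simp only [hP]; split <;> norm_num
    refine ⟨E, hEherm, hEpsd, hE1psd, ?_⟩
    have hval : ((E * Δ).trace).re = ∑ i, max (lam i) 0 := by
      rw [my_trace_formula hΔ E, ← hU, ← hlam]
      have hdiag : star U * E * U = diagonal (fun i => ((P i : ℝ) : ℂ)) := by
        rw [hE, show star U * (U * diagonal (fun i => ((P i : ℝ) : ℂ)) * star U) * U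
          = (star U * U) * diagonal (fun i => ((P i : ℝ) : ℂ)) * (star U * U) by noncomm_ring,
          hUU, Matrix.one_mul, Matrix.mul_one]
      rw [hdiag]
      congr 1; funext i
      rw [diagonal_apply_eq, Complex.ofReal_re]
      simp only [hP]
      rcases lt_or_ge 0 (lam i) with h | h
      · rw [if_pos h, max_eq_left h.le, mul_one]
      · rw [if_neg (not_lt.mpr h), max_eq_right h, mul_zero]
    rw [hprob E, hval, hTD]
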